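/- arXiv:1610.05107 — 2 statements merged into one kernel-verified Lean document; each statement's English description precedes it below -/
import Mathlib

section
/- Fix an integer m ≥ 2, k ∈ ℕ and n ∈ ℕ. Let r ∈ {0,…,m−1} be the unique integer such that ε_{k−1}(n) = ε_{k−2}(n) = ⋯ = ε_{k−r}(n) = 1 and ε_{k−r−1}(n) = 0 (such r exists since no m consecutive digits of the greedy expansion equal 1), and set μ_k = Σ_{j=0}^{k−1} ε_{k−1−j}(n) φ_m^j. Then μ_k/φ_m^k ≤ V_{φ_m}(n) < (μ_k + φ_m^r − Σ_{i=0}^{r−1} φ_m^i)/φ_m^k. -/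
open MeasureTheory Filter Set

namespace Mbon

/-- The `m`-bonacci sequence `F m`. -/
noncomputable def F (m : ℕ) : ℕ → ℕ := fun k =>
  Nat.strongRecOn k fun k ih =>
    if h : k < m then 2 ^ k
    else ∑ j ∈ (Finset.range m).attach,
      ih (k - (j : ℕ) - 1) (by have := Finset.mem_range.mp j.2; omega)

/-- `ε : ℕ → ℕ` is the (unique) greedy digit string of `n` in the `m`-bonacci
numeration system: digits in `{0,1}`, finitely many nonzero digits, no `m`
consecutive digits all equal to `1`, and the digits represent `n`. -/
def IsGreedy (m n : ℕ) (ε : ℕ → ℕ) : Prop :=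
  (∀ j, ε j ≤ 1) ∧
  (∀ j, ¬ (∀ i, i < m → ε (j + i) = 1)) ∧
  (∃ J, (∀ j, J ≤ j → ε j = 0) ∧ n = ∑ j ∈ Finset.range J, ε j * F m j)

/-- digits indexed by `ℤ`, with the convention `ε_j = 0` for `j < 0`. -/
def digZ (ε : ℕ → ℕ) (j : ℤ) : ℕ := if 0 ≤ j then ε j.toNat else 0

/-- `r` is such that `ε_{k-1} = ⋯ = ε_{k-r} = 1` and `ε_{k-r-1} = 0`. -/
def RunLen (m : ℕ) (ε : ℕ → ℕ) (k r : ℕ) : Prop :=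
  r < m ∧ (∀ i : ℕ, 1 ≤ i → i ≤ r → digZ ε ((k : ℤ) - i) = 1) ∧
    digZ ε ((k : ℤ) - r - 1) = 0

/-- `φ` is the `m`-bonacci number: the real root `> 1` of `x^m = x^{m-1}+⋯+x+1`. -/
def IsPhi (m : ℕ) (φ : ℝ) : Prop := 1 < φ ∧ φ ^ m = ∑ i ∈ Finset.range m, φ ^ i

/-- the `φ`-adic van der Corput value `V_φ(n) = Σ_j ε_j(n) φ^{-j-1}`. -/
noncomputable def VdC (φ : ℝ) (ε : ℕ → ℕ) : ℝ := ∑' j : ℕ, (ε j : ℝ) * φ ^ (-(j : ℤ) - 1)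

/-- `μ_k = Σ_{j=0}^{k-1} ε_{k-1-j} φ^j`. -/
noncomputable def muk (φ : ℝ) (ε : ℕ → ℕ) (k : ℕ) : ℝ :=
  ∑ j ∈ Finset.range k, (ε (k - 1 - j) : ℝ) * φ ^ j

/-- `ν_k = Σ_{j=0}^{k-1} ε_j F_j^{(m)}`. -/
noncomputable def nuk (m : ℕ) (ε : ℕ → ℕ) (k : ℕ) : ℕ := ∑ j ∈ Finset.range k, ε j * F m j

/-- The substitution `σ_m` on the alphabet `Fin m` (`0`-based; the letter `i+1`
of the paper corresponds to `i : Fin m`): `σ(i) = 1(i+1)` for `i < m`, `σ(m) = 1`. -/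
def sub {m : ℕ} (i : Fin m) : List (Fin m) :=
  if h : (i : ℕ) + 1 < m then [⟨0, i.pos⟩, ⟨(i : ℕ) + 1, h⟩] else [⟨0, i.pos⟩]

/-- extension of `σ_m` to words. -/
def subw {m : ℕ} (w : List (Fin m)) : List (Fin m) := w.flatMap sub

/-- `σ_m^k(1)`, a prefix of the infinite fixed point of `σ_m`. -/
def fixWord (m : ℕ) (k : ℕ) : List (Fin m) :=
  subw^[k] (if h : 0 < m then [⟨0, h⟩] else [])

/-- abelianization `l(w)` of a word, as a vector in `ℝ^m`. -/
noncomputable def ab {m : ℕ} (w : List (Fin m)) : Fin m → ℝ := fun i => (w.count i : ℝ)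

/-- The incidence matrix `B_m` of `σ_m`; its `(i,j)` entry is `|σ_m(j)|_i`. -/
noncomputable def B (m : ℕ) : Matrix (Fin m) (Fin m) ℝ :=
  Matrix.of fun i j => ((sub j).count i : ℝ)

/-- `u` is a right eigenvector of `B_m` for the eigenvalue `φ`. -/
def IsRightEv (m : ℕ) (φ : ℝ) (u : Fin m → ℝ) : Prop := u ≠ 0 ∧ (B m).mulVec u = φ • u

/-- `v` is a left eigenvector of `B_m` for the eigenvalue `φ`. -/
def IsLeftEv (m : ℕ) (φ : ℝ) (v : Fin m → ℝ) : Prop := v ≠ 0 ∧ (B m).vecMul v = φ • v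

/-- the projection `π_c` onto `v^⊥` along `u`. -/
noncomputable def proj {m : ℕ} (u v : Fin m → ℝ) (x : Fin m → ℝ) : Fin m → ℝ :=
  x - ((∑ i, v i * x i) / (∑ i, v i * u i)) • u

/-- the hyperplane `v^⊥ = {x : ⟨v,x⟩ = 0}`. -/
def vperp {m : ℕ} (v : Fin m → ℝ) : Set (Fin m → ℝ) := {x | ∑ i, v i * x i = 0}

/-- standard basis vector `e_{i+1}` of `ℝ^m`. -/
def stdb {m : ℕ} (i : Fin m) : Fin m → ℝ := Pi.single i 1

/-- the first standard basis vector `e_1` of `ℝ^m`. -/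
def e1 (m : ℕ) : Fin m → ℝ := fun j => if (j : ℕ) = 0 then 1 else 0

/-- the lattice `L_m = ⟨π_c(e_1-e_2),…,π_c(e_1-e_m)⟩_ℤ`. -/
def latt {m : ℕ} (u v : Fin m → ℝ) : AddSubgroup (Fin m → ℝ) :=
  AddSubgroup.closure {x | ∃ i : Fin m, (i : ℕ) ≠ 0 ∧ x = proj u v (e1 m - stdb i)}

/-- a fundamental mesh of the lattice `L_m`. -/
def mesh {m : ℕ} (u v : Fin m → ℝ) : Set (Fin m → ℝ) :=
  {x | ∃ t : Fin m → ℝ, (∀ i, 0 ≤ t i ∧ t i < 1) ∧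
    x = ∑ i ∈ Finset.univ.filter (fun i : Fin m => (i : ℕ) ≠ 0),
      t i • proj u v (e1 m - stdb i)}

/-- the Lebesgue measure `λ_v` on `v^⊥`, normalized so that a fundamental mesh of
`L_m` has measure `1` (realized as normalized `(m-1)`-dimensional Hausdorff measure). -/
noncomputable def lamv (m : ℕ) (u v : Fin m → ℝ) : Measure (Fin m → ℝ) :=
  (μH[(m : ℝ) - 1] (mesh u v))⁻¹ • μH[(m : ℝ) - 1]

/-- the subtile `R_m(i)` of the Rauzy fractal. -/
noncomputable def Rtile {m : ℕ} (u v : Fin m → ℝ) (i : Fin m) : Set (Fin m → ℝ) :=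
  closure {x | ∃ (k : ℕ) (p s : List (Fin m)),
    fixWord m k = p ++ i :: s ∧ x = proj u v (ab p)}

/-- the Rauzy fractal `R_m` of `σ_m`. -/
noncomputable def Rfrac {m : ℕ} (u v : Fin m → ℝ) : Set (Fin m → ℝ) :=
  closure {x | ∃ (k : ℕ) (p s : List (Fin m)),
    fixWord m k = p ++ s ∧ x = proj u v (ab p)}

/-- interior of `A` relative to the subspace `V`. -/
def relInterior {X : Type*} [TopologicalSpace X] (V A : Set X) : Set X :=
  Subtype.val '' interior (Subtype.val ⁻¹' A : Set V)

/-- boundary of `A` relative to the subspace `V`. -/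
def relFrontier {X : Type*} [TopologicalSpace X] (V A : Set X) : Set X :=
  Subtype.val '' frontier (Subtype.val ⁻¹' A : Set V)

/-- minimal number of sets of diameter `≤ δ` needed to cover `A`. -/
noncomputable def coverNum {X : Type*} [PseudoMetricSpace X] (A : Set X) (δ : ℝ) : ℕ :=
  sInf {n : ℕ | ∃ f : Fin n → Set X, (∀ i, Metric.diam (f i) ≤ δ) ∧ A ⊆ ⋃ i, f i}

/-- the (upper) box counting dimension. -/
noncomputable def dimB {X : Type*} [PseudoMetricSpace X] (A : Set X) : ℝ :=
  Filter.limsup (fun δ : ℝ => Real.log (coverNum A δ) / Real.log (1 / δ))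
    (nhdsWithin 0 (Set.Ioi 0))

/-- the one-dimensional star discrepancy `D_N`. -/
noncomputable def starDisc1 (y : ℕ → ℝ) (N : ℕ) : ℝ :=
  sSup {d : ℝ | ∃ ω : ℝ, 0 < ω ∧ ω ≤ 1 ∧
    d = |(∑ n ∈ Finset.range N,
        Set.indicator (Set.Ico 0 ω) (fun _ => (1 : ℝ)) (y n)) / N - ω|}

/-- the `s`-dimensional star discrepancy `D_N`. -/
noncomputable def starDisc {s : ℕ} (y : ℕ → Fin s → ℝ) (N : ℕ) : ℝ :=
  sSup {d : ℝ | ∃ ω : Fin s → ℝ, (∀ i, 0 < ω i ∧ ω i ≤ 1) ∧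
    d = |(∑ n ∈ Finset.range N,
        Set.indicator (Set.univ.pi fun i => Set.Ico (0 : ℝ) (ω i)) (fun _ => (1 : ℝ)) (y n)) / N -
      ∏ i, ω i|}

/-- `i_0 →^{p_0} i_1 →^{p_1} ⋯ →^{p_{k-1}} i_k` is a walk of length `k` in the
prefix-suffix graph `G_{σ_m}`: for each step there is an edge from `i_t` to
`i_{t+1}` labelled `(p_t, i_t, s_t)`, i.e. `σ_m(i_{t+1}) = p_t i_t s_t`. -/
def IsWalk {m : ℕ} (k : ℕ) (i : Fin (k + 1) → Fin m) (p : Fin k → List (Fin m)) : Prop :=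
  ∀ t : Fin k, ∃ s : List (Fin m), sub (i t.succ) = p t ++ i t.castSucc :: s

/-- the collection `S_k^{(m)}` of level-`k` subtiles
`B_m^k R_m(i_k) + π_c l(σ_m^{k-1}(p_{k-1})⋯σ_m(p_1)p_0)` of the Rauzy fractal. -/
noncomputable def levelTiles (m k : ℕ) (u v : Fin m → ℝ) : Set (Set (Fin m → ℝ)) :=
  {S | ∃ (i : Fin (k + 1) → Fin m) (p : Fin k → List (Fin m)), IsWalk k i p ∧
    S = (fun x => (B m ^ k).mulVec x +
          ∑ t : Fin k, proj u v (ab (subw^[(t : ℕ)] (p t)))) '' Rtile u v (i (Fin.last k))}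

/-- the saturation `S + L_m` of a set `S` by the lattice `L_m`. -/
def satur {m : ℕ} (u v : Fin m → ℝ) (S : Set (Fin m → ℝ)) : Set (Fin m → ℝ) :=
  {x | ∃ y ∈ S, ∃ l ∈ latt u v, x = y + l}



/-- geometric identity: `φ^m (φ-1) = φ^m - 1`. -/
lemma phi_rel (m : ℕ) (φ : ℝ) (hφ : 1 < φ) (h : φ ^ m = ∑ i ∈ Finset.range m, φ ^ i) :
    φ ^ m * (φ - 1) = φ ^ m - 1 := by
  have := geom_sum_mul φ m
  rw [← h] at this
  linarith [this]

lemma ident (m r : ℕ) (hrm : r < m) (φ : ℝ) (hφ : 1 < φ)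
    (h : φ ^ m = ∑ i ∈ Finset.range m, φ ^ i) :
    ∑ i ∈ Finset.range (m - r), φ ^ (-(i : ℤ) - 1) = φ ^ r - ∑ i ∈ Finset.range r, φ ^ i := by
  have hφ0 : (0:ℝ) < φ := by linarith
  have hφne : φ ≠ 0 := ne_of_gt hφ0
  have hpm : φ ^ m ≠ 0 := pow_ne_zero _ hφne
  apply mul_left_cancel₀ hpm
  have h2 : φ ^ m * ∑ i ∈ Finset.range (m - r), φ ^ (-(i : ℤ) - 1)
      = φ ^ m - ∑ i ∈ Finset.range r, φ ^ i := by
    rw [Finset.mul_sum]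
    have step : ∀ i ∈ Finset.range (m - r), φ ^ m * φ ^ (-(i : ℤ) - 1) = φ ^ (m - 1 - i) := by
      intro i hi
      simp only [Finset.mem_range] at hi
      rw [← zpow_natCast φ m, ← zpow_add₀ hφne, ← zpow_natCast φ (m - 1 - i)]
      congr 1
      omega
    rw [Finset.sum_congr rfl step]
    have refl : ∑ i ∈ Finset.range (m - r), φ ^ (m - 1 - i)
        = ∑ i ∈ Finset.range (m - r), φ ^ (r + i) := by
      rw [← Finset.sum_range_reflect (fun i => φ ^ (r + i)) (m - r)]
      apply Finset.sum_congr rfl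
      intro i hi
      simp only [Finset.mem_range] at hi
      congr 1
      omega
    rw [refl]
    have hm' : m = r + (m - r) := by omega
    have split : φ ^ m = (∑ i ∈ Finset.range r, φ ^ i) + ∑ i ∈ Finset.range (m - r), φ ^ (r + i) :=
      calc φ ^ m = ∑ i ∈ Finset.range (r + (m - r)), φ ^ i := by rw [← hm', h]
        _ = _ := Finset.sum_range_add _ _ _
    linarith [split]
  rw [h2]
  have f1 := geom_sum_mul φ r
  have f2 := phi_rel m φ hφ h
  set S := ∑ i ∈ Finset.range r, φ ^ i with hS
  linear_combination (φ : ℝ) ^ m * f1 - S * f2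

/-- key counting lemma -/
lemma key (m : ℕ) (φ : ℝ) (hφ1 : 1 < φ)
    (hone : ∑ i ∈ Finset.range m, φ ^ (-(i : ℤ) - 1) = 1) :
    ∀ N : ℕ, ∀ δ : ℕ → ℕ, (∀ j, δ j ≤ 1) → (∀ j, ∃ i, i < m ∧ δ (j + i) = 0) →
    ∀ b : ℕ, b ≤ m → (∃ i, i < b ∧ δ i = 0) →
    ∑ j ∈ Finset.range N, (δ j : ℝ) * φ ^ (-(j : ℤ) - 1)
      < ∑ i ∈ Finset.range b, φ ^ (-(i : ℤ) - 1) := by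
  have hφ0 : (0:ℝ) < φ := by linarith
  have hφne : φ ≠ 0 := ne_of_gt hφ0
  have hterm : ∀ j : ℕ, (0:ℝ) < φ ^ (-(j : ℤ) - 1) := fun j => zpow_pos hφ0 _
  intro N
  induction N using Nat.strong_induction_on with
  | _ N ih =>
    intro δ h1 h2 b hbm hex
    have hfind : ∃ s, δ s = 0 := ⟨hex.choose, hex.choose_spec.2⟩
    set s := Nat.find hfind with hs
    have hs0 : δ s = 0 := Nat.find_spec hfind
    have hone' : ∀ j, j < s → δ j = 1 := by
      intro j hj
      have := Nat.find_min hfind hj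
      have := h1 j
      omega
    have hsb : s < b := by
      obtain ⟨i0, hi0, hδ⟩ := hex
      have : s ≤ i0 := Nat.find_min' hfind hδ
      omega
    by_cases hNs : N ≤ s
    · -- all digits 1, short sum
      have heq : ∑ j ∈ Finset.range N, (δ j : ℝ) * φ ^ (-(j : ℤ) - 1)
          = ∑ j ∈ Finset.range N, φ ^ (-(j : ℤ) - 1) := by
        apply Finset.sum_congr rfl
        intro j hj
        simp only [Finset.mem_range] at hj
        rw [hone' j (by omega)]
        simp
      rw [heq]
      apply Finset.sum_lt_sum_of_subset (Finset.range_subset_range.mpr (by omega : N ≤ b))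
        (i := N) (by simp; omega) (by simp) (hterm N)
      intro j _ _
      exact le_of_lt (hterm j)
    · push_neg at hNs
      have hNsplit : N = (s + 1) + (N - s - 1) := by omega
      set M := N - s - 1 with hM
      rw [hNsplit, Finset.sum_range_add]
      have hhead : ∑ j ∈ Finset.range (s + 1), (δ j : ℝ) * φ ^ (-(j : ℤ) - 1)
          = ∑ j ∈ Finset.range s, φ ^ (-(j : ℤ) - 1) := by
        rw [Finset.sum_range_succ, hs0]
        simp only [Nat.cast_zero, zero_mul, add_zero]
        apply Finset.sum_congr rfl
        intro j hj
        simp only [Finset.mem_range] at hj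
        rw [hone' j hj]
        simp
      rw [hhead]
      have htail : ∑ j ∈ Finset.range M, (δ (s + 1 + j) : ℝ) * φ ^ (-((s + 1 + j : ℕ) : ℤ) - 1)
          = φ ^ (-(s : ℤ) - 1) * ∑ j ∈ Finset.range M, (δ (s + 1 + j) : ℝ) * φ ^ (-(j : ℤ) - 1) := by
        rw [Finset.mul_sum]
        apply Finset.sum_congr rfl
        intro j _
        rw [← mul_assoc, mul_comm (φ ^ (-(s:ℤ)-1)) ((δ (s+1+j) : ℝ)), mul_assoc]
        congr 1
        rw [← zpow_add₀ hφne]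
        congr 1
        push_cast
        ring
      rw [htail]
      have hIH : ∑ j ∈ Finset.range M, (δ (s + 1 + j) : ℝ) * φ ^ (-(j : ℤ) - 1)
          < 1 := by
        rw [← hone]
        apply ih M (by omega)
        · intro j; exact h1 _
        · intro j
          obtain ⟨i, him, hi⟩ := h2 (s + 1 + j)
          exact ⟨i, him, by simpa [add_assoc] using hi⟩
        · exact le_rfl
        · obtain ⟨i, him, hi⟩ := h2 (s + 1)
          exact ⟨i, him, hi⟩
      have hlt : φ ^ (-(s : ℤ) - 1) * ∑ j ∈ Finset.range M, (δ (s + 1 + j) : ℝ) * φ ^ (-(j : ℤ) - 1)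
          < φ ^ (-(s : ℤ) - 1) := by
        calc φ ^ (-(s : ℤ) - 1) * ∑ j ∈ Finset.range M, (δ (s + 1 + j) : ℝ) * φ ^ (-(j : ℤ) - 1)
            < φ ^ (-(s : ℤ) - 1) * 1 := by
              exact mul_lt_mul_of_pos_left hIH (hterm s)
          _ = φ ^ (-(s : ℤ) - 1) := mul_one _
      have hsum : ∑ j ∈ Finset.range s, φ ^ (-(j : ℤ) - 1) + φ ^ (-(s : ℤ) - 1)
          = ∑ j ∈ Finset.range (s + 1), φ ^ (-(j : ℤ) - 1) := by
        rw [Finset.sum_range_succ]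
      have hmono : ∑ j ∈ Finset.range (s + 1), φ ^ (-(j : ℤ) - 1)
          ≤ ∑ i ∈ Finset.range b, φ ^ (-(i : ℤ) - 1) := by
        apply Finset.sum_le_sum_of_subset_of_nonneg (Finset.range_subset_range.mpr (by omega))
        intro j _ _
        exact le_of_lt (hterm j)
      linarith


/-- Proposition 3.1 (1): the van der Corput value `V_{φ_m}(n)` lies in
`[μ_k/φ_m^k, (μ_k + φ_m^r - Σ_{i<r} φ_m^i)/φ_m^k)`. -/
theorem stmt0 (m : ℕ) (hm : 2 ≤ m) (k n r : ℕ) (φ : ℝ) (hφ : IsPhi m φ)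
    (ε : ℕ → ℕ) (hε : IsGreedy m n ε) (hr : RunLen m ε k r) :
    muk φ ε k / φ ^ k ≤ VdC φ ε ∧
      VdC φ ε < (muk φ ε k + φ ^ r - ∑ i ∈ Finset.range r, φ ^ i) / φ ^ k := by
  obtain ⟨hφ1, hφm⟩ := hφ
  obtain ⟨hd1, hno, J, hJ0, hn⟩ := hε
  obtain ⟨hrm, hrun, hend⟩ := hr
  have hφ0 : (0:ℝ) < φ := by linarith
  have hφne : φ ≠ 0 := ne_of_gt hφ0
  have hterm : ∀ j : ℕ, (0:ℝ) < φ ^ (-(j : ℤ) - 1) := fun j => zpow_pos hφ0 _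
  have hpk : (0:ℝ) < φ ^ k := pow_pos hφ0 k
  -- r ≤ k
  have hrk : r ≤ k := by
    by_contra hcon
    push_neg at hcon
    have h1r : 1 ≤ r := by omega
    have := hrun r h1r le_rfl
    rw [digZ, if_neg (by push_cast; omega)] at this
    omega
  -- helper: digZ at nonneg nat points
  have hdig : ∀ i : ℕ, i ≤ k → digZ ε ((k : ℤ) - i) = ε (k - i) := by
    intro i hi
    rw [digZ, if_pos (by push_cast; omega)]
    congr 1
    omega
  -- existence of a zero digit among ε (k+i), i < m - r
  have hzero : ∃ i, i < m - r ∧ ε (k + i) = 0 := by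
    obtain ⟨i0, hi0m, hi0⟩ := by
      have := hno (k - r)
      push_neg at this
      exact this
    have hri : r ≤ i0 := by
      by_contra hcon
      push_neg at hcon
      apply hi0
      have h := hrun (r - i0) (by omega) (by omega)
      rw [hdig (r - i0) (by omega)] at h
      have : k - (r - i0) = k - r + i0 := by omega
      rwa [this] at h
    refine ⟨i0 - r, by omega, ?_⟩
    have heq : k + (i0 - r) = k - r + i0 := by omega
    rw [heq]
    have := hd1 (k - r + i0)
    omega
  -- finite expression for VdC
  have hVdC : VdC φ ε = ∑ j ∈ Finset.range (k + J), (ε j : ℝ) * φ ^ (-(j : ℤ) - 1) := by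
    apply tsum_eq_sum
    intro j hj
    simp only [Finset.mem_range, not_lt] at hj
    rw [hJ0 j (by omega)]
    simp
  rw [hVdC, Finset.sum_range_add]
  -- head equals muk / φ^k
  have hmuk : muk φ ε k = ∑ j ∈ Finset.range k, (ε j : ℝ) * φ ^ (k - 1 - j) := by
    rw [muk, ← Finset.sum_range_reflect (fun j => (ε (k - 1 - j) : ℝ) * φ ^ j) k]
    apply Finset.sum_congr rfl
    intro j hj
    simp only [Finset.mem_range] at hj
    have : k - 1 - (k - 1 - j) = j := by omega
    rw [this]
  have hhead : ∑ j ∈ Finset.range k, (ε j : ℝ) * φ ^ (-(j : ℤ) - 1) = muk φ ε k / φ ^ k := by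
    rw [hmuk, Finset.sum_div]
    apply Finset.sum_congr rfl
    intro j hj
    simp only [Finset.mem_range] at hj
    rw [mul_div_assoc]
    congr 1
    rw [← zpow_natCast φ (k - 1 - j), ← zpow_natCast φ k, ← zpow_sub₀ hφne]
    congr 1
    omega
  rw [hhead]
  -- tail factorization
  have htail : ∑ j ∈ Finset.range J, (ε (k + j) : ℝ) * φ ^ (-((k + j : ℕ) : ℤ) - 1)
      = φ ^ (-(k : ℤ)) * ∑ j ∈ Finset.range J, (ε (k + j) : ℝ) * φ ^ (-(j : ℤ) - 1) := by
    rw [Finset.mul_sum]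
    apply Finset.sum_congr rfl
    intro j _
    rw [← mul_assoc, mul_comm (φ ^ (-(k : ℤ))) ((ε (k + j) : ℝ)), mul_assoc]
    congr 1
    rw [← zpow_add₀ hφne]
    congr 1
    push_cast
    ring
  rw [htail]
  have hone : ∑ i ∈ Finset.range m, φ ^ (-(i : ℤ) - 1) = 1 := by
    have := ident m 0 (by omega) φ hφ1 hφm
    simpa using this
  have hkey : ∑ j ∈ Finset.range J, (ε (k + j) : ℝ) * φ ^ (-(j : ℤ) - 1)
      < φ ^ r - ∑ i ∈ Finset.range r, φ ^ i := by
    rw [← ident m r hrm φ hφ1 hφm]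
    apply key m φ hφ1 hone J (fun j => ε (k + j)) (fun j => hd1 _)
    · intro j
      have := hno (k + j)
      push_neg at this
      obtain ⟨i, him, hi⟩ := this
      refine ⟨i, him, ?_⟩
      have h2 := hd1 (k + j + i)
      have : k + (j + i) = k + j + i := by omega
      rw [this]
      omega
    · omega
    · exact hzero
  have hnn : (0:ℝ) ≤ ∑ j ∈ Finset.range J, (ε (k + j) : ℝ) * φ ^ (-(j : ℤ) - 1) := by
    apply Finset.sum_nonneg
    intro j _
    exact mul_nonneg (Nat.cast_nonneg _) (le_of_lt (hterm j))
  have hzk : φ ^ (-(k : ℤ)) = (φ ^ k)⁻¹ := by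
    rw [zpow_neg, zpow_natCast]
  have hzkpos : (0:ℝ) < φ ^ (-(k : ℤ)) := zpow_pos hφ0 _
  constructor
  · nlinarith [mul_nonneg (le_of_lt hzkpos) hnn]
  · have h1 : φ ^ (-(k : ℤ)) * ∑ j ∈ Finset.range J, (ε (k + j) : ℝ) * φ ^ (-(j : ℤ) - 1)
        < φ ^ (-(k : ℤ)) * (φ ^ r - ∑ i ∈ Finset.range r, φ ^ i) :=
      mul_lt_mul_of_pos_left hkey hzkpos
    have h2 : φ ^ (-(k : ℤ)) * (φ ^ r - ∑ i ∈ Finset.range r, φ ^ i)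
        = (φ ^ r - ∑ i ∈ Finset.range r, φ ^ i) / φ ^ k := by
      rw [hzk]; ring
    rw [h2] at h1
    have h3 : (muk φ ε k + φ ^ r - ∑ i ∈ Finset.range r, φ ^ i) / φ ^ k
        = muk φ ε k / φ ^ k + (φ ^ r - ∑ i ∈ Finset.range r, φ ^ i) / φ ^ k := by
      ring
    rw [h3]
    linarith


end Mbon
end

section
/- Fix an integer m ≥ 2, k ∈ ℕ and n ∈ ℕ. Let r ∈ {0,…,m−1} be the unique integer such that ε_{k−1}(n) = ⋯ = ε_{k−r}(n) = 1 and ε_{k−r−1}(n) = 0, and set ν_k = Σ_{j=0}^{k−1} ε_j(n) F_j^{(m)}. Then n·π_c(e_1) ∈ ν_k·π_c(e_1) + B_m^k(⋃_{i=1}^{m−r} R_m(i)) + L_m, i.e. there exist i ∈ {1,…,m−r}, a point x ∈ R_m(i) and a lattice element λ ∈ L_m with n·π_c(e_1) = ν_k·π_c(e_1) + B_m^k x + λ. -/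
open MeasureTheory Filter Set

namespace Mbon

section Aux

theorem F_def (m k : ℕ) : F m k = if k < m then 2^k
    else ∑ j ∈ (Finset.range m).attach, F m (k - (j:ℕ) - 1) := by
  have h : F m k = (Nat.strongRecOn (motive := fun _ => ℕ) k fun k ih =>
      if h : k < m then 2 ^ k
      else ∑ j ∈ (Finset.range m).attach,
        ih (k - (j : ℕ) - 1) (by have := Finset.mem_range.mp j.2; omega)) := rfl
  rw [h]
  unfold Nat.strongRecOn
  rw [WellFounded.fix_eq]
  split <;> rfl

theorem F_lt {m k : ℕ} (h : k < m) : F m k = 2^k := by rw [F_def, if_pos h]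

theorem F_rec {m k : ℕ} (h : m ≤ k) :
    F m k = ∑ j ∈ Finset.range m, F m (k - j - 1) := by
  rw [F_def, if_neg (by omega)]
  exact Finset.sum_attach (Finset.range m) (fun j => F m (k - j - 1))

/-- `F` extended to `ℤ`, with `Fz (-1) = 1` and `Fz j = 0` for `j ≤ -2`. -/
noncomputable def Fz (m : ℕ) (k : ℤ) : ℤ :=
  if 0 ≤ k then (F m k.toNat : ℤ) else if k = -1 then 1 else 0

theorem geom2 (K : ℕ) : ∑ i ∈ Finset.range K, (2:ℤ)^i = 2^K - 1 := by
  induction K with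
  | zero => simp
  | succ K ih => rw [Finset.sum_range_succ, ih]; ring

theorem Fz_rec (m : ℕ) (hm : 2 ≤ m) (k : ℤ) (hk : 0 ≤ k) :
    Fz m k = ∑ t ∈ Finset.range m, Fz m (k - t - 1) := by
  by_cases hkm : (m : ℤ) ≤ k
  · have h1 : Fz m k = (F m k.toNat : ℤ) := by rw [Fz, if_pos hk]
    have h2 : ∀ t ∈ Finset.range m, Fz m (k - t - 1) = (F m (k.toNat - t - 1) : ℤ) := by
      intro t ht
      have ht' := Finset.mem_range.mp ht
      rw [Fz, if_pos (by omega)]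
      congr 2
      omega
    rw [h1, Finset.sum_congr rfl h2, ← Nat.cast_sum]
    congr 1
    exact F_rec (by omega)
  · set K := k.toNat with hK
    have hKm : K < m := by omega
    have h1 : Fz m k = 2^K := by
      rw [Fz, if_pos hk, F_lt hKm]; push_cast; ring
    rw [h1, Finset.range_eq_Ico, ← Finset.sum_Ico_consecutive _ (Nat.zero_le (K+1)) (by omega : K + 1 ≤ m)]
    have h2 : ∑ t ∈ Finset.Ico (K+1) m, Fz m (k - t - 1) = 0 := by
      apply Finset.sum_eq_zero
      intro t ht
      have ht' := Finset.mem_Ico.mp ht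
      rw [Fz, if_neg (by omega), if_neg (by omega)]
    rw [h2, add_zero, ← Finset.range_eq_Ico, Finset.sum_range_succ]
    have h3 : Fz m (k - K - 1) = 1 := by rw [Fz, if_neg (by omega), if_pos (by omega)]
    have h4 : ∀ t ∈ Finset.range K, Fz m (k - t - 1) = (2:ℤ)^(K - 1 - t) := by
      intro t ht
      have ht' := Finset.mem_range.mp ht
      rw [Fz, if_pos (by omega)]
      have : (k - t - 1).toNat = K - 1 - t := by omega
      rw [this, F_lt (by omega)]
      push_cast
      ring
    rw [h3, Finset.sum_congr rfl h4, Finset.sum_range_reflect (fun i => (2:ℤ)^i) K, geom2]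
    ring

end Aux
section Words
variable {m : ℕ}

theorem subw_nil : subw ([] : List (Fin m)) = [] := rfl

theorem subw_cons (a : Fin m) (w : List (Fin m)) : subw (a :: w) = sub a ++ subw w :=
  List.flatMap_cons

theorem subw_append (w₁ w₂ : List (Fin m)) : subw (w₁ ++ w₂) = subw w₁ ++ subw w₂ :=
  List.flatMap_append

theorem subw_iter_append (n : ℕ) (w₁ w₂ : List (Fin m)) :
    subw^[n] (w₁ ++ w₂) = subw^[n] w₁ ++ subw^[n] w₂ := by
  induction n generalizing w₁ w₂ with
  | zero => rfl
  | succ n ih => simp only [Function.iterate_succ_apply, subw_append, ih]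

theorem ab_nil : ab ([] : List (Fin m)) = 0 := by
  funext i; simp [ab]

theorem ab_append (w₁ w₂ : List (Fin m)) : ab (w₁ ++ w₂) = ab w₁ + ab w₂ := by
  funext i; simp [ab, List.count_append]

theorem ab_cons (a : Fin m) (w : List (Fin m)) :
    ab (a :: w) = Pi.single a 1 + ab w := by
  funext i
  simp only [ab, List.count_cons, Pi.add_apply, Pi.single_apply]
  rcases eq_or_ne i a with h | h
  · subst h; simp; ring
  · simp [h, Ne.symm h]

theorem ab_single (a : Fin m) : ab [a] = Pi.single a 1 := by
  rw [show [a] = a :: [] from rfl, ab_cons, ab_nil, add_zero]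

theorem ab_sub (a : Fin m) : ab (sub a) = (B m).mulVec (Pi.single a 1) := by
  funext i
  rw [Matrix.mulVec_single]
  simp [B, ab]

theorem ab_subw (w : List (Fin m)) : ab (subw w) = (B m).mulVec (ab w) := by
  induction w with
  | nil => rw [subw_nil, ab_nil, Matrix.mulVec_zero]
  | cons a w ih =>
      rw [subw_cons, ab_append, ab_sub, ih, ab_cons, Matrix.mulVec_add]

theorem sum_ab (w : List (Fin m)) : ∑ i, ab w i = (w.length : ℝ) := by
  induction w with
  | nil => simp [ab_nil]
  | cons a w ih =>
      rw [ab_cons]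
      simp only [Pi.add_apply, Finset.sum_add_distrib, ih, Finset.sum_pi_single']
      simp
      ring

theorem e1_eq (hm : 0 < m) : e1 m = Pi.single (⟨0, hm⟩ : Fin m) 1 := by
  funext j
  simp only [e1, Pi.single_apply]
  by_cases h : (j : ℕ) = 0
  · rw [if_pos h, if_pos (Fin.ext h)]
  · rw [if_neg h, if_neg (fun hh => h (by rw [hh]))]

theorem fixWord_succ (j : ℕ) : fixWord m (j+1) = subw (fixWord m j) := by
  rw [fixWord, fixWord, Function.iterate_succ_apply']

theorem fixWord_zero (hm : 0 < m) : fixWord m 0 = [(⟨0, hm⟩ : Fin m)] := by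
  rw [fixWord]
  simp [hm]

theorem ab_fixWord (hm : 0 < m) (j : ℕ) :
    ab (fixWord m j) = (B m ^ j).mulVec (e1 m) := by
  induction j with
  | zero =>
      rw [fixWord_zero hm, ab_single, pow_zero, Matrix.one_mulVec, e1_eq hm]
  | succ j ih =>
      rw [fixWord_succ, ab_subw, ih, Matrix.mulVec_mulVec, ← pow_succ']

end Words
section Length
variable {m : ℕ}

theorem len_iter (hm : 2 ≤ m) (j : ℕ) (i : Fin m) :
    ((subw^[j] [i]).length : ℤ) = ∑ t ∈ Finset.range (m - i), Fz m ((j:ℤ) - t - 1) := by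
  induction j generalizing i with
  | zero =>
      have h0 : (0:ℕ) ∈ Finset.range (m - (i:ℕ)) := Finset.mem_range.mpr (by omega)
      rw [Function.iterate_zero_apply]
      rw [Finset.sum_eq_single_of_mem 0 h0 ?side]
      · simp [Fz]
      case side =>
        intro t _ ht
        rw [Fz, if_neg (by omega), if_neg (by omega)]
  | succ j ih =>
      rw [Function.iterate_succ_apply]
      have hsub : subw [i] = sub i := by
        rw [subw_cons, subw_nil, List.append_nil]
      rw [hsub]
      by_cases h : (i : ℕ) + 1 < m
      · have : sub i = [(⟨0, i.pos⟩ : Fin m)] ++ [(⟨(i:ℕ)+1, h⟩ : Fin m)] := by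
          rw [sub, dif_pos h]; rfl
        rw [this, subw_iter_append, List.length_append]
        push_cast
        rw [ih ⟨0, i.pos⟩, ih ⟨(i:ℕ)+1, h⟩]
        simp only [Fin.val_mk, Nat.sub_zero]
        rw [← Fz_rec m hm (j:ℤ) (by positivity)]
        have hmi : m - (i:ℕ) = (m - ((i:ℕ)+1)) + 1 := by omega
        rw [hmi, Finset.sum_range_succ' (fun t => Fz m ((j:ℤ) + 1 - t - 1)) (m - ((i:ℕ)+1))]
        have h1 : ∀ t, Fz m ((j:ℤ) + 1 - (t+1:ℕ) - 1) = Fz m ((j:ℤ) - t - 1) := by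
          intro t; congr 1; push_cast; ring
        have h2 : Fz m ((j:ℤ) + 1 - (0:ℕ) - 1) = Fz m (j:ℤ) := by congr 1; push_cast; ring
        rw [Finset.sum_congr rfl (fun t _ => h1 t), h2]
        ring
      · have : sub i = [(⟨0, i.pos⟩ : Fin m)] := by rw [sub, dif_neg h]
        rw [this, ih ⟨0, i.pos⟩]
        simp only [Fin.val_mk, Nat.sub_zero]
        rw [← Fz_rec m hm (j:ℤ) (by positivity)]
        have hmi : m - (i:ℕ) = 1 := by omega
        rw [hmi, Finset.sum_range_one]
        congr 1
        push_cast
        ring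

theorem len_fixWord (hm : 2 ≤ m) (j : ℕ) : (fixWord m j).length = F m j := by
  have h0 : 0 < m := by omega
  have h := len_iter hm j (⟨0, h0⟩ : Fin m)
  rw [fixWord] at *
  rw [dif_pos h0] at *
  have h2 : ∑ t ∈ Finset.range (m - ((⟨0,h0⟩ : Fin m):ℕ)), Fz m ((j:ℤ) - t - 1)
      = Fz m (j:ℤ) := by
    rw [show ((⟨0,h0⟩ : Fin m):ℕ) = 0 from rfl, Nat.sub_zero, ← Fz_rec m hm (j:ℤ) (by positivity)]
  rw [h2] at h
  have h3 : Fz m (j:ℤ) = (F m j : ℤ) := by simp [Fz]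
  rw [h3] at h
  exact_mod_cast h

theorem sum_pow_e1 (hm : 2 ≤ m) (j : ℕ) :
    ∑ i, ((B m ^ j).mulVec (e1 m)) i = (F m j : ℝ) := by
  rw [← ab_fixWord (by omega) j, sum_ab, len_fixWord hm j]

end Length
section Proj
variable {m : ℕ} (u v : Fin m → ℝ)

theorem proj_apply (x : Fin m → ℝ) (i : Fin m) :
    proj u v x i = x i - ((∑ j, v j * x j) / (∑ j, v j * u j)) * u i := by
  simp [proj]

theorem proj_add (x y : Fin m → ℝ) : proj u v (x + y) = proj u v x + proj u v y := by
  funext i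
  simp only [proj_apply, Pi.add_apply]
  have h : ∑ j, v j * (x j + y j) = ∑ j, v j * x j + ∑ j, v j * y j := by
    rw [← Finset.sum_add_distrib]; congr 1; funext j; ring
  rw [h, add_div]
  ring

theorem proj_smul (r : ℝ) (x : Fin m → ℝ) : proj u v (r • x) = r • proj u v x := by
  funext i
  simp only [proj_apply, Pi.smul_apply, smul_eq_mul]
  have h : ∑ j, v j * (r * x j) = r * ∑ j, v j * x j := by
    rw [Finset.mul_sum]; congr 1; funext j; ring
  rw [h, mul_div_assoc]
  ring

theorem proj_zero : proj u v (0 : Fin m → ℝ) = 0 := by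
  funext i; simp [proj_apply]

theorem proj_neg (x : Fin m → ℝ) : proj u v (-x) = - proj u v x := by
  have := proj_smul u v (-1) x
  simpa using this

theorem proj_sub (x y : Fin m → ℝ) : proj u v (x - y) = proj u v x - proj u v y := by
  rw [sub_eq_add_neg, proj_add, proj_neg, sub_eq_add_neg]

theorem proj_sum {α : Type*} (s : Finset α) (f : α → Fin m → ℝ) :
    proj u v (∑ a ∈ s, f a) = ∑ a ∈ s, proj u v (f a) := by
  classical
  induction s using Finset.induction_on with
  | empty => simp [proj_zero]
  | insert _ _ hns ih =>
      rw [Finset.sum_insert hns, Finset.sum_insert hns, proj_add, ih]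

theorem vecMul_coord {φ : ℝ} (hv : IsLeftEv m φ v) (x : Fin m → ℝ) :
    ∑ i, v i * ((B m).mulVec x) i = φ * ∑ i, v i * x i := by
  have hvB : ∀ j, ∑ i, v i * B m i j = φ * v j := by
    intro j
    have := congrFun hv.2 j
    simp only [Matrix.vecMul, dotProduct, Pi.smul_apply, smul_eq_mul] at this
    convert this using 2
  calc ∑ i, v i * ((B m).mulVec x) i
      = ∑ i, ∑ j, v i * (B m i j * x j) := by
        simp only [Matrix.mulVec, dotProduct, Finset.mul_sum]
    _ = ∑ j, ∑ i, v i * (B m i j * x j) := Finset.sum_comm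
    _ = ∑ j, (∑ i, v i * B m i j) * x j := by
        congr 1; funext j; rw [Finset.sum_mul]; congr 1; funext i; ring
    _ = ∑ j, (φ * v j) * x j := by
        congr 1; funext j; rw [hvB j]
    _ = φ * ∑ i, v i * x i := by rw [Finset.mul_sum]; congr 1; funext j; ring

theorem proj_mulVec {φ : ℝ} (hu : IsRightEv m φ u) (hv : IsLeftEv m φ v) (x : Fin m → ℝ) :
    (B m).mulVec (proj u v x) = proj u v ((B m).mulVec x) := by
  have hproj : proj u v x = x - ((∑ j, v j * x j) / (∑ j, v j * u j)) • u := rfl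
  rw [hproj, Matrix.mulVec_sub, Matrix.mulVec_smul, hu.2]
  funext i
  rw [proj_apply, vecMul_coord v hv x]
  simp only [Pi.sub_apply, Pi.smul_apply, smul_eq_mul]
  rw [mul_div_assoc]
  ring

theorem proj_pow_mulVec {φ : ℝ} (hu : IsRightEv m φ u) (hv : IsLeftEv m φ v) (k : ℕ)
    (x : Fin m → ℝ) :
    (B m ^ k).mulVec (proj u v x) = proj u v ((B m ^ k).mulVec x) := by
  induction k with
  | zero => rw [pow_zero, Matrix.one_mulVec, Matrix.one_mulVec]
  | succ k ih =>
      rw [pow_succ', ← Matrix.mulVec_mulVec, ← Matrix.mulVec_mulVec, ih,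
        proj_mulVec u v hu hv]

theorem latt_mem_gen (hm : 0 < m) (a : Fin m) :
    proj u v (e1 m - stdb a) ∈ latt u v := by
  by_cases h : (a : ℕ) = 0
  · have : e1 m - stdb a = 0 := by
      rw [e1_eq hm]
      have : a = ⟨0, hm⟩ := Fin.ext h
      rw [this, stdb, sub_self]
    rw [this, proj_zero]
    exact (latt u v).zero_mem
  · exact AddSubgroup.subset_closure ⟨a, h, rfl⟩

theorem latt_diff (hm : 0 < m) (w : List (Fin m)) :
    (w.length : ℝ) • proj u v (e1 m) - proj u v (ab w) ∈ latt u v := by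
  induction w with
  | nil => rw [ab_nil, proj_zero]; simp
  | cons a w ih =>
      have hkey : ((a :: w).length : ℝ) • proj u v (e1 m) - proj u v (ab (a :: w))
          = ((w.length : ℝ) • proj u v (e1 m) - proj u v (ab w))
            + proj u v (e1 m - stdb a) := by
        rw [ab_cons, proj_add, proj_sub, List.length_cons]
        push_cast
        rw [add_smul, one_smul]
        have : Pi.single a (1:ℝ) = stdb a := rfl
        rw [this]
        abel
      rw [hkey]
      exact (latt u v).add_mem ih (latt_mem_gen u v hm a)

end Proj
section Core
variable {m : ℕ}

theorem core (hm : 0 < m) :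
    ∀ (J : ℕ) (δ : ℕ → ℕ), (∀ j, δ j ≤ 1) → (∀ j, ¬ (∀ i, i < m → δ (j + i) = 1)) →
    (∀ j, J ≤ j → δ j = 0) →
    ∃ (s : ℕ) (hs : s < m) (p tail : List (Fin m)),
      (∀ j, j < s → δ j = 1) ∧ δ s = 0 ∧
      fixWord m J = p ++ (⟨s, hs⟩ : Fin m) :: tail ∧
      ab p = ∑ j ∈ Finset.range J, (δ j : ℝ) • (B m ^ j).mulVec (e1 m) := by
  intro J
  induction J with
  | zero =>
      intro δ hd hnom hJ
      refine ⟨0, hm, [], [], ?_, hJ 0 le_rfl, ?_, ?_⟩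
      · intro j hj; omega
      · rw [fixWord_zero hm]; rfl
      · rw [ab_nil, Finset.range_zero, Finset.sum_empty]
  | succ J ih =>
      intro δ hd hnom hJ
      obtain ⟨s', hs', p', tl', hrun', hz', hfix', hab'⟩ :=
        ih (fun j => δ (j + 1)) (fun j => hd (j + 1))
          (fun j hall => hnom (j + 1) (fun i hi => by
            have := hall i hi
            simpa [Nat.add_right_comm] using this))
          (fun j hj => hJ (j + 1) (by omega))
      have hfixS : fixWord m (J + 1) = subw p' ++ sub ⟨s', hs'⟩ ++ subw tl' := by
        rw [fixWord_succ, hfix', subw_append, subw_cons, ← List.append_assoc]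
      have habS : ab (subw p') =
          ∑ j ∈ Finset.range J, (δ (j + 1) : ℝ) • (B m ^ (j + 1)).mulVec (e1 m) := by
        rw [ab_subw, hab']
        have : (B m).mulVec (∑ j ∈ Finset.range J, (δ (j+1) : ℝ) • (B m ^ j).mulVec (e1 m))
            = ∑ j ∈ Finset.range J, (δ (j+1) : ℝ) • (B m).mulVec ((B m ^ j).mulVec (e1 m)) := by
          rw [← Matrix.mulVecLin_apply, map_sum]
          congr 1; funext j
          rw [_root_.map_smul, Matrix.mulVecLin_apply]
        rw [this]
        congr 1; funext j
        rw [Matrix.mulVec_mulVec, ← pow_succ']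
      have h01 : δ 0 = 0 ∨ δ 0 = 1 := by have := hd 0; omega
      rcases h01 with h0 | h0
      · -- first digit 0 : next letter is 0
        obtain ⟨rest, hrest⟩ : ∃ rest, sub (⟨s', hs'⟩ : Fin m) = (⟨0, hm⟩ : Fin m) :: rest := by
          rw [sub]
          split
          · exact ⟨_, rfl⟩
          · exact ⟨[], rfl⟩
        refine ⟨0, hm, subw p', rest ++ subw tl', ?_, h0, ?_, ?_⟩
        · intro j hj; omega
        · rw [hfixS, hrest]; simp [List.append_assoc]
        · rw [habS, Finset.sum_range_succ' _ J]
          have : ((δ 0 : ℝ)) • (B m ^ 0).mulVec (e1 m) = 0 := by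
            rw [h0]; simp
          rw [this, add_zero]
      · -- first digit 1 : next letter is s' + 1
        have hs : s' + 1 < m := by
          by_contra hge
          apply hnom 0
          intro i hi
          rcases Nat.eq_zero_or_pos i with h | h
          · simpa [h] using h0
          · have : i - 1 < s' := by omega
            have := hrun' (i - 1) this
            simpa [Nat.sub_add_cancel h] using this
        have hrest : sub (⟨s', hs'⟩ : Fin m) = [(⟨0, hm⟩ : Fin m), (⟨s' + 1, hs⟩ : Fin m)] := by
          rw [sub, dif_pos]
        refine ⟨s' + 1, hs, subw p' ++ [(⟨0, hm⟩ : Fin m)], subw tl', ?_, hz', ?_, ?_⟩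
        · intro j hj
          rcases Nat.eq_zero_or_pos j with h | h
          · simpa [h] using h0
          · have : j - 1 < s' := by omega
            have := hrun' (j - 1) this
            simpa [Nat.sub_add_cancel h] using this
        · rw [hfixS, hrest]; simp [List.append_assoc]
        · rw [ab_append, habS, ab_single, Finset.sum_range_succ' _ J]
          congr 1
          rw [h0, pow_zero, Matrix.one_mulVec, e1_eq hm]
          simp
end Core
/-- Proposition 3.1 (2): `n·π_c(e_1) ∈ ν_k·π_c(e_1) + B_m^k (⋃_{i=1}^{m-r} R_m(i)) + L_m`.
(Letters are `0`-based: `i : Fin m` corresponds to the letter `i+1`, so the range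
`i ∈ {1,…,m-r}` becomes `(i : ℕ) < m - r`.) -/
theorem stmt1 (m : ℕ) (hm : 2 ≤ m) (k n r : ℕ) (φ : ℝ) (hφ : IsPhi m φ)
    (u v : Fin m → ℝ) (hu : IsRightEv m φ u) (hv : IsLeftEv m φ v)
    (ε : ℕ → ℕ) (hε : IsGreedy m n ε) (hr : RunLen m ε k r) :
    ∃ i : Fin m, (i : ℕ) < m - r ∧ ∃ x ∈ Rtile u v i, ∃ l ∈ latt u v,
      (n : ℝ) • proj u v (e1 m) =
        (nuk m ε k : ℝ) • proj u v (e1 m) + (B m ^ k).mulVec x + l := by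
  obtain ⟨hd, hnom, J, hJ0, hn⟩ := hε
  obtain ⟨hrm, hrun, hrz⟩ := hr
  have h0m : 0 < m := by omega
  -- the run length `r` does not exceed `k`
  have hrk : r ≤ k := by
    by_contra hc
    have h := hrun (k + 1) (by omega) (by omega)
    rw [digZ, if_neg (by push_cast; omega)] at h
    omega
  -- the run condition in terms of natural number indices
  have hrunN : ∀ i, 1 ≤ i → i ≤ r → ε (k - i) = 1 := by
    intro i h1 h2
    have h := hrun i h1 (by exact_mod_cast h2)
    rw [digZ, if_pos (by push_cast; omega)] at h
    rw [show ((k : ℤ) - (i : ℕ)).toNat = k - i by omega] at h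
    exact h
  -- apply the Dumont–Thomas normal form to the digits shifted by `k`
  obtain ⟨s, hs, p, tl, hrunS, hzS, hfixS, habS⟩ := core h0m J (fun j => ε (k + j))
    (fun j => hd (k + j))
    (fun j hall => hnom (k + j) (fun i hi => by
      have := hall i hi; rwa [← Nat.add_assoc] at this))
    (fun j hj => hJ0 (k + j) (by omega))
  -- the run of ones at the bottom of the shifted digits has length `< m - r`
  have hsr : s < m - r := by
    by_contra hc
    apply hnom (k - r)
    intro i hi
    rcases Nat.lt_or_ge i r with h | h
    · have h2 := hrunN (r - i) (by omega) (by omega)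
      rwa [show k - r + i = k - (r - i) by omega]
    · have h2 := hrunS (i - r) (by omega)
      rwa [show k - r + i = k + (i - r) by omega]
  refine ⟨⟨s, hs⟩, hsr, proj u v (ab p), subset_closure ⟨J, p, tl, hfixS, rfl⟩, ?_⟩
  -- apply the normal form to the digits truncated below `k`
  obtain ⟨s₂, hs₂, p₂, tl₂, -, -, -, hab₂⟩ := core h0m k (fun j => if j < k then ε j else 0)
    (fun j => by split
                 · exact hd j
                 · exact Nat.zero_le 1)
    (fun j hall => by
      rcases Nat.lt_or_ge (j + (m - 1)) k with h | h
      · exact hnom j (fun i hi => by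
          have := hall i hi; rwa [if_pos (by omega)] at this)
      · have := hall (m - 1) (by omega)
        rw [if_neg (by omega)] at this
        omega)
    (fun j hj => by rw [if_neg (by omega)])
  have hab₂' : ab p₂ = ∑ j ∈ Finset.range k, (ε j : ℝ) • (B m ^ j).mulVec (e1 m) := by
    rw [hab₂]
    refine Finset.sum_congr rfl fun j hj => ?_
    rw [if_pos (Finset.mem_range.mp hj)]
  -- apply the normal form to the full digit string with bound `k + J`
  obtain ⟨s₃, hs₃, p₃, tl₃, -, -, -, hab₃⟩ := core h0m (k + J) ε hd hnom
    (fun j hj => hJ0 j (by omega))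
  -- auxiliary computation of coordinate sums
  have hsum : ∀ (K : ℕ) (c : ℕ → ℕ),
      ∑ i, (∑ j ∈ Finset.range K, (c j : ℝ) • (B m ^ j).mulVec (e1 m)) i
        = ∑ j ∈ Finset.range K, (c j : ℝ) * (F m j : ℝ) := by
    intro K c
    calc ∑ i, (∑ j ∈ Finset.range K, (c j : ℝ) • (B m ^ j).mulVec (e1 m)) i
        = ∑ i, ∑ j ∈ Finset.range K, (c j : ℝ) * ((B m ^ j).mulVec (e1 m)) i := by
          simp [Finset.sum_apply]
      _ = ∑ j ∈ Finset.range K, ∑ i, (c j : ℝ) * ((B m ^ j).mulVec (e1 m)) i :=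
          Finset.sum_comm
      _ = ∑ j ∈ Finset.range K, (c j : ℝ) * ∑ i, ((B m ^ j).mulVec (e1 m)) i := by
          refine Finset.sum_congr rfl fun j _ => ?_; rw [Finset.mul_sum]
      _ = ∑ j ∈ Finset.range K, (c j : ℝ) * (F m j : ℝ) := by
          refine Finset.sum_congr rfl fun j _ => ?_; rw [sum_pow_e1 hm]
  -- length identities
  have lenp₂ : (p₂.length : ℝ) = (nuk m ε k : ℝ) := by
    rw [← sum_ab p₂, hab₂', hsum k ε, nuk]
    push_cast
    rfl
  have hn' : n = ∑ j ∈ Finset.range (k + J), ε j * F m j := by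
    rw [hn]
    refine Finset.sum_subset (Finset.range_subset_range.mpr (by omega)) fun x hx hnx => ?_
    rw [hJ0 x (by simpa using hnx), zero_mul]
  have lenp₃ : (p₃.length : ℝ) = (n : ℝ) := by
    rw [← sum_ab p₃, hab₃, hsum (k + J) ε, hn']
    push_cast
    rfl
  -- `B^k (ab p)` in terms of the digits
  have hBx : (B m ^ k).mulVec (ab p)
      = ∑ j ∈ Finset.range J, (ε (k + j) : ℝ) • (B m ^ (k + j)).mulVec (e1 m) := by
    rw [habS, ← Matrix.mulVecLin_apply, map_sum]
    refine Finset.sum_congr rfl fun j _ => ?_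
    rw [_root_.map_smul, Matrix.mulVecLin_apply, Matrix.mulVec_mulVec, ← pow_add]
  have hsplit : ab p₃ = ab p₂ + (B m ^ k).mulVec (ab p) := by
    rw [hab₃, hab₂', hBx, Finset.range_eq_Ico,
      ← Finset.sum_Ico_consecutive _ (Nat.zero_le k) (by omega : k ≤ k + J),
      ← Finset.range_eq_Ico]
    congr 1
    rw [Finset.sum_Ico_eq_sum_range]
    simp
  -- assemble the lattice element
  have hx : (B m ^ k).mulVec (proj u v (ab p)) = proj u v ((B m ^ k).mulVec (ab p)) :=
    proj_pow_mulVec u v hu hv k (ab p)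
  refine ⟨(n : ℝ) • proj u v (e1 m) - (nuk m ε k : ℝ) • proj u v (e1 m)
      - (B m ^ k).mulVec (proj u v (ab p)), ?_, by abel⟩
  have hzero : proj u v (ab p₃) - proj u v (ab p₂) - proj u v ((B m ^ k).mulVec (ab p)) = 0 := by
    rw [← proj_sub, ← proj_sub, hsplit,
      show ab p₂ + (B m ^ k).mulVec (ab p) - ab p₂ - (B m ^ k).mulVec (ab p) = 0 by abel,
      proj_zero]
  have hl : (n : ℝ) • proj u v (e1 m) - (nuk m ε k : ℝ) • proj u v (e1 m)
      - (B m ^ k).mulVec (proj u v (ab p))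
      = (((p₃.length : ℝ)) • proj u v (e1 m) - proj u v (ab p₃))
        - (((p₂.length : ℝ)) • proj u v (e1 m) - proj u v (ab p₂))
        + (proj u v (ab p₃) - proj u v (ab p₂) - proj u v ((B m ^ k).mulVec (ab p))) := by
    rw [hx, lenp₂, lenp₃]
    abel
  rw [hl, hzero, add_zero]
  exact AddSubgroup.sub_mem _ (latt_diff u v h0m p₃) (latt_diff u v h0m p₂)

end Mbon
end
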